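/- Let X be a real vector space, n ≥ 2, and let (·,·|·,...,·) be a weak n-inner product on X. Then the induced function ‖x|xₙ,...,x₂‖ := √((x,x|xₙ,...,x₂)) satisfies the triangle inequality: ‖x+y|xₙ,...,x₂‖ ≤ ‖x|xₙ,...,x₂‖ + ‖y|xₙ,...,x₂‖ for all x, y, x₂, ..., xₙ ∈ X. -/
import Mathlib


/-- A weak `n`-inner product on a real vector space `X`, where `n = m + 2 ≥ 2`.
The value `f x y v` represents `(x, y | xₙ, …, x₂)`, where the tuple
`v : Fin (m+1) → X` lists the conditioning vectors `xₙ, x_{n-1}, …, x₂`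
(so `v 0 = xₙ`). -/
structure WeakNInner (X : Type*) [AddCommGroup X] [Module ℝ X] (m : ℕ) where
  f : X → X → (Fin (m + 1) → X) → ℝ
  /-- P1 (positivity) -/
  nonneg : ∀ (x : X) (v : Fin (m + 1) → X), 0 ≤ f x x v
  /-- P1 (definiteness): `(x,x|xₙ,…,x₂) = 0` iff `x, x₂, …, xₙ` are linearly dependent. -/
  eq_zero_iff : ∀ (x : X) (v : Fin (m + 1) → X),
    f x x v = 0 ↔ ¬ LinearIndependent ℝ (Fin.cons x v : Fin (m + 2) → X)
  /-- P2 (interchangeability): `(x,x|xₙ,x_{n-1},…,x₂) = (xₙ,xₙ|x,x_{n-1},…,x₂)`. -/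
  interchange : ∀ (x : X) (v : Fin (m + 1) → X),
    f x x v = f (v 0) (v 0) (Function.update v 0 x)
  /-- P3 (symmetry) -/
  symm : ∀ (x y : X) (v : Fin (m + 1) → X), f x y v = f y x v
  /-- P4 (homogeneity) -/
  smul_left : ∀ (α : ℝ) (x y : X) (v : Fin (m + 1) → X),
    f (α • x) y v = α * f x y v
  /-- P5 (additivity) -/
  add_left : ∀ (x x' y : X) (v : Fin (m + 1) → X),
    f (x + x') y v = f x y v + f x' y v

/-- The induced weak `n`-norm `‖x|xₙ,…,x₂‖ := √((x,x|xₙ,…,x₂))` satisfies the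
triangle inequality. -/
theorem weakNInner_norm_triangle {X : Type*} [AddCommGroup X] [Module ℝ X]
    {m : ℕ} (P : WeakNInner X m) (x y : X) (v : Fin (m + 1) → X) :
    Real.sqrt (P.f (x + y) (x + y) v) ≤
      Real.sqrt (P.f x x v) + Real.sqrt (P.f y y v) := by
  have addr : ∀ (a b c : X), P.f a (b + c) v = P.f a b v + P.f a c v := by
    intro a b c
    rw [P.symm, P.add_left, P.symm b, P.symm c]
  have smulr : ∀ (α : ℝ) (a b : X), P.f a (α • b) v = α * P.f a b v := by
    intro α a b
    rw [P.symm, P.smul_left, P.symm]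
  have expand : ∀ t : ℝ, P.f (x + t • y) (x + t • y) v
      = P.f y y v * t ^ 2 + 2 * P.f x y v * t + P.f x x v := by
    intro t
    simp only [P.add_left, addr, P.smul_left, smulr, P.symm y x]
    ring
  have cs : (P.f x y v) ^ 2 ≤ P.f x x v * P.f y y v := by
    rcases eq_or_lt_of_le (P.nonneg y v) with hy | hy
    · -- f y y v = 0, so y dependent; then for all t the quadratic is linear ≥ 0
      have hlin : ∀ t : ℝ, 0 ≤ 2 * P.f x y v * t + P.f x x v := by
        intro t
        have := P.nonneg (x + t • y) v
        rw [expand t, ← hy] at this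
        linarith
      have hxy : P.f x y v = 0 := by
        by_contra h
        have ht := hlin (-(P.f x x v + 1) / (2 * P.f x y v))
        have h2 : (2 * P.f x y v) ≠ 0 := by
          intro h0; apply h; linarith
        rw [mul_div_cancel₀ _ h2] at ht
        linarith
      rw [hxy, ← hy]; simp
    · have hd : discrim (P.f y y v) (2 * P.f x y v) (P.f x x v) ≤ 0 := by
        apply discrim_le_zero
        intro t
        have := P.nonneg (x + t • y) v
        rw [expand t] at this
        linarith
      unfold discrim at hd
      nlinarith
  have key : P.f (x + y) (x + y) v ≤
      (Real.sqrt (P.f x x v) + Real.sqrt (P.f y y v)) ^ 2 := by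
    have e1 : P.f (x + y) (x + y) v
        = P.f x x v + 2 * P.f x y v + P.f y y v := by
      rw [P.add_left, addr, addr, P.symm y x]; ring
    have h1 : P.f x y v ≤ Real.sqrt (P.f x x v) * Real.sqrt (P.f y y v) := by
      have := Real.sqrt_le_sqrt cs
      rw [Real.sqrt_mul (P.nonneg x v)] at this
      calc P.f x y v ≤ |P.f x y v| := le_abs_self _
        _ = Real.sqrt ((P.f x y v) ^ 2) := (Real.sqrt_sq_eq_abs _).symm
        _ ≤ _ := this
    have hsx := Real.sq_sqrt (P.nonneg x v)
    have hsy := Real.sq_sqrt (P.nonneg y v)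
    rw [e1]; nlinarith
  calc Real.sqrt (P.f (x + y) (x + y) v)
      ≤ Real.sqrt ((Real.sqrt (P.f x x v) + Real.sqrt (P.f y y v)) ^ 2) :=
        Real.sqrt_le_sqrt key
    _ = Real.sqrt (P.f x x v) + Real.sqrt (P.f y y v) := by
        rw [Real.sqrt_sq (by positivity)]
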